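/- Let G be a finite simple graph, S a subgraph of G, and L a list assignment for G such that L(u) is nonempty for every vertex u of G and G is S-critical with respect to L. Let H be a subgraph of G such that S is a proper subgraph of H, every edge in E(G) \ E(H) has no endpoint in V(H) \ V(S), and every edge of H with both endpoints in V(S) belongs to S. Then H is S-critical with respect to L. -/

import Mathlib

/-- An `L`-coloring of the subgraph `H` of `G`: a function assigning colors such that every
vertex of `H` gets a color from its list and adjacent vertices of `H` get distinct colors. -/
def IsLColoring {V α : Type*} (G : SimpleGraph V) (L : V → Finset α) (H : G.Subgraph)
    (φ : V → α) : Prop :=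
  (∀ v ∈ H.verts, φ v ∈ L v) ∧ ∀ ⦃u v : V⦄, H.Adj u v → φ u ≠ φ v

/-- An `L`-coloring `φ` of the subgraph `S` extends to the subgraph `H` (with `S ⊆ H`) if there
is an `L`-coloring of `H` agreeing with `φ` on the vertices of `S`. -/
def ExtendsToLColoring {V α : Type*} (G : SimpleGraph V) (L : V → Finset α) (S H : G.Subgraph)
    (φ : V → α) : Prop :=
  ∃ ψ : V → α, IsLColoring G L H ψ ∧ ∀ v ∈ S.verts, ψ v = φ v

/-- The subgraph `K` of `G` is `S`-critical with respect to `L`: for every proper subgraph `H`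
of `K` with `S ⊆ H`, some `L`-coloring of `S` extends to `H` but not to `K`. -/
def IsCriticalSub {V α : Type*} (G : SimpleGraph V) (L : V → Finset α) (S K : G.Subgraph) :
    Prop :=
  ∀ H : G.Subgraph, S ≤ H → H < K →
    ∃ φ : V → α, IsLColoring G L S φ ∧ ExtendsToLColoring G L S H φ ∧
      ¬ ExtendsToLColoring G L S K φ

/-- if `G` is `S`-critical, `S` is a proper subgraph of `H`, no edge of
`E(G) \ E(H)` has an endpoint in `V(H) \ V(S)`, and every edge of `H` with both endpoints in
`V(S)` belongs to `S`, then `H` is `S`-critical with respect to `L`. -/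
theorem statement_2 {V α : Type*} [Fintype V] (G : SimpleGraph V) (L : V → Finset α)
    (S H : G.Subgraph)
    (hL : ∀ u : V, (L u).Nonempty)
    (hcrit : IsCriticalSub G L S ⊤)
    (hSH : S < H)
    (hedges : ∀ u v : V, G.Adj u v → ¬ H.Adj u v →
      u ∉ H.verts \ S.verts ∧ v ∉ H.verts \ S.verts)
    (hinduced : ∀ u v : V, H.Adj u v → u ∈ S.verts → v ∈ S.verts → S.Adj u v) :
    IsCriticalSub G L S H := by
  classical
  intro H' hSH' hH'H
  -- The auxiliary subgraph K = H' together with all of G outside H.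
  set K : G.Subgraph :=
    { verts := H'.verts ∪ (Set.univ \ H.verts)
      Adj := fun u v => H'.Adj u v ∨ (G.Adj u v ∧ ¬ H.Adj u v)
      adj_sub := by
        rintro u v (h | ⟨h, -⟩)
        · exact h.adj_sub
        · exact h
      edge_vert := by
        rintro u v (h | ⟨hG, hnH⟩)
        · exact Or.inl h.fst_mem
        · have hu := (hedges u v hG hnH).1
          by_cases huH : u ∈ H.verts
          · have huS : u ∈ S.verts := by
              by_contra hS
              exact hu ⟨huH, hS⟩
            exact Or.inl (hSH'.1 huS)
          · exact Or.inr ⟨trivial, huH⟩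
      symm := by
        constructor
        rintro u v (h | ⟨hG, hnH⟩)
        · exact Or.inl h.symm
        · exact Or.inr ⟨hG.symm, fun hv => hnH hv.symm⟩ } with hKdef
  have hSK : S ≤ K := by
    constructor
    · intro v hv
      exact Or.inl (hSH'.1 hv)
    · intro u v huv
      exact Or.inl (hSH'.2 huv)
  have hH'K : H' ≤ K := by
    constructor
    · intro v hv; exact Or.inl hv
    · intro u v huv; exact Or.inl huv
  have hKtop : K < ⊤ := by
    refine lt_of_le_of_ne le_top ?_
    intro hEq
    have hnle : ¬ H ≤ H' := hH'H.not_ge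
    by_cases hverts : H.verts ⊆ H'.verts
    · by_cases hadj : ∀ ⦃u v : V⦄, H.Adj u v → H'.Adj u v
      · exact hnle ⟨hverts, hadj⟩
      · push_neg at hadj
        obtain ⟨u, v, huv, hnH'⟩ := hadj
        have hK : K.Adj u v := by
          rw [hEq]
          exact huv.adj_sub
        rcases hK with h | ⟨-, h⟩
        · exact hnH' h
        · exact h huv
    · obtain ⟨v, hvH, hvH'⟩ := Set.not_subset.mp hverts
      have hv : v ∈ K.verts := by rw [hEq]; trivial
      rcases hv with h | h
      · exact hvH' h
      · exact h.2 hvH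
  obtain ⟨φ, hφS, ⟨ψ, ⟨hψL, hψadj⟩, hψφ⟩, hnotext⟩ := hcrit K hSK hKtop
  refine ⟨φ, hφS, ⟨ψ, ⟨fun v hv => hψL v (hH'K.1 hv),
    fun u v huv => hψadj (hH'K.2 huv)⟩, hψφ⟩, ?_⟩
  rintro ⟨θ, ⟨hθL, hθadj⟩, hθφ⟩
  apply hnotext
  set χ : V → α := fun v => if v ∈ H.verts then θ v else ψ v with hχdef
  have key : ∀ w : V, w ∉ H.verts \ S.verts → χ w = ψ w := by
    intro w hw
    by_cases hwH : w ∈ H.verts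
    · have hwS : w ∈ S.verts := by
        by_contra hS; exact hw ⟨hwH, hS⟩
      simp only [hχdef, if_pos hwH]
      rw [hθφ w hwS, hψφ w hwS]
    · simp only [hχdef, if_neg hwH]
  refine ⟨χ, ⟨?_, ?_⟩, ?_⟩
  · intro v _
    by_cases hvH : v ∈ H.verts
    · simpa only [hχdef, if_pos hvH] using hθL v hvH
    · simp only [hχdef, if_neg hvH]
      exact hψL v (Or.inr ⟨trivial, hvH⟩)
  · intro u v huv
    have hG : G.Adj u v := huv.adj_sub
    by_cases hH : H.Adj u v
    · have hu := hH.fst_mem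
      have hv := hH.snd_mem
      simp only [hχdef, if_pos hu, if_pos hv]
      exact hθadj hH
    · obtain ⟨hu, hv⟩ := hedges u v hG hH
      rw [key u hu, key v hv]
      exact hψadj (Or.inr ⟨hG, hH⟩)
  · intro v hv
    have hvH : v ∈ H.verts := hSH.1.1 hv
    simp only [hχdef, if_pos hvH]
    exact hθφ v hv
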